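/- Let J ⊆ I be a finite-index inclusion of discrete abelian groups and r : Î → Ĵ the restriction map of Pontryagin duals. For each γ ∈ Ĵ there exists an open neighborhood N of γ and continuous maps h_1, ..., h_n : N → Î (where n = [I : J]) with mutually disjoint images such that r ∘ h_j = id_N for each j and r⁻¹(E) is the disjoint union of h_1(E), ..., h_n(E) for every E ⊆ N; moreover the Haar measure of h_j(E) is independent of j for every measurable E ⊆ N. -/

import Mathlib

open MeasureTheory

/-- The inclusion of a subgroup `J` of a discrete abelian group `I`, as a continuous
monoid homomorphism. -/
def subgroupInclusion {I : Type*} [CommGroup I] [TopologicalSpace I] (J : Subgroup I) :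
    ContinuousMonoidHom J I :=
  ⟨J.subtype, continuous_subtype_val⟩

noncomputable instance : DivisibleBy (Additive Circle) ℤ where
  div a n := Additive.ofMul (Circle.exp (Complex.arg ((Additive.toMul a : Circle) : ℂ) / n))
  div_zero a := by simp [Circle.exp_zero]
  div_cancel := by
    intro n a hn
    have key : ∀ (m : ℤ) (t : ℝ), Circle.exp (m * t) = Circle.exp t ^ m := by
      intro m t
      simpa [zsmul_eq_mul] using map_zsmul Circle.expHom m t
    show Additive.ofMul ((Circle.exp _) ^ n) = a
    rw [← key n _]
    have : (n : ℝ) * (Complex.arg ((Additive.toMul a : Circle) : ℂ) / n) =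
        Complex.arg ((Additive.toMul a : Circle) : ℂ) := by field_simp
    rw [this, Circle.exp_arg]
    rfl

/-- Extension of circle-valued characters along an injection of discrete abelian groups. -/
theorem exists_monoidHom_extension {I : Type*} [CommGroup I] (J : Subgroup I)
    (χ : J →* Circle) : ∃ χ' : I →* Circle, ∀ j : J, χ' j = χ j := by
  obtain ⟨h, hh⟩ := (Module.Baer.of_divisible (Additive Circle)).extension_property_addMonoidHom
    (MonoidHom.toAdditive J.subtype) (fun a b hab => by
      exact Additive.toMul.injective (Subtype.ext (hab : _))) (MonoidHom.toAdditive χ)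
  refine ⟨MonoidHom.toAdditive.symm h, fun j => ?_⟩
  exact congrArg Additive.toMul (DFunLike.congr_fun hh j)

/-- Circle-valued and `ℂˣ`-valued homs agree for finite groups. -/
noncomputable def monoidHomCircleEquivUnits (G : Type*) [CommGroup G] [Finite G] :
    (G →* Circle) ≃ (G →* ℂˣ) where
  toFun ψ := Circle.toUnits.comp ψ
  invFun φ :=
    { toFun := fun g => ⟨(φ g : ℂˣ), by
        have h1 : ((φ g : ℂˣ) : ℂ) ^ (orderOf g) = 1 := by
          rw [← Units.val_pow_eq_pow_val, ← map_pow, pow_orderOf_eq_one, map_one, Units.val_one]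
        have := Complex.norm_eq_one_of_pow_eq_one h1 (orderOf_pos g).ne'
        show ((φ g : ℂˣ) : ℂ) ∈ Metric.sphere (0:ℂ) 1
        simpa using mem_sphere_zero_iff_norm.mpr this⟩
      map_one' := by ext; simp
      map_mul' := fun a b => by ext; simp; rfl }
  left_inv ψ := by ext g; rfl
  right_inv φ := by ext g; rfl

theorem nat_card_monoidHom_circle (G : Type*) [CommGroup G] [Finite G] :
    Nat.card (G →* Circle) = Nat.card G := by
  have : NeZero (Monoid.exponent G) := ⟨Monoid.exponent_ne_zero_of_finite⟩
  obtain ⟨e⟩ := CommGroup.monoidHom_mulEquiv_of_hasEnoughRootsOfUnity G ℂ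
  rw [Nat.card_congr (monoidHomCircleEquivUnits G), Nat.card_congr e.toEquiv]

theorem nat_card_ker_restriction {I : Type*} [CommGroup I] [TopologicalSpace I]
    [DiscreteTopology I] (J : Subgroup I) [J.FiniteIndex] :
    Nat.card (PontryaginDual.map (subgroupInclusion J)).toMonoidHom.ker = J.index := by
  set r := PontryaginDual.map (subgroupInclusion J)
  have hker : ∀ χ : PontryaginDual I, χ ∈ r.toMonoidHom.ker → ∀ i ∈ J, χ i = 1 := by
    intro χ hχ i hi
    have := DFunLike.congr_fun (hχ : r χ = 1) (⟨i, hi⟩ : J)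
    exact this
  let e : r.toMonoidHom.ker ≃ ((I ⧸ J) →* Circle) :=
    { toFun := fun χ => QuotientGroup.lift J (χ : PontryaginDual I).toMonoidHom
        (fun i hi => hker χ χ.2 i hi)
      invFun := fun φ => ⟨⟨φ.comp (QuotientGroup.mk' J), continuous_of_discreteTopology⟩, by
        refine ContinuousMonoidHom.ext fun j => ?_
        show φ (QuotientGroup.mk' J (j : I)) = 1
        have : QuotientGroup.mk' J (j : I) = 1 := (QuotientGroup.eq_one_iff _).mpr j.2
        rw [this, map_one]⟩
      left_inv := fun χ => by
        exact Subtype.ext (ContinuousMonoidHom.ext fun i => rfl)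
      right_inv := fun φ => MonoidHom.ext fun x => by
        obtain ⟨i, rfl⟩ := QuotientGroup.mk_surjective x
        rfl }
  rw [Nat.card_congr e, nat_card_monoidHom_circle, ← Subgroup.index_eq_card]

theorem compactSpace_pontryaginDual (I : Type*) [CommGroup I] [TopologicalSpace I]
    [DiscreteTopology I] : CompactSpace (PontryaginDual I) := by
  let S : Set (I → Circle) := {f | f 1 = 1 ∧ ∀ x y, f (x * y) = f x * f y}
  have hSclosed : IsClosed S := by
    have : S = {f : I → Circle | f 1 = 1} ∩ ⋂ x, ⋂ y, {f : I → Circle | f (x * y) = f x * f y} := by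
      ext f; simp [S]
    rw [this]
    exact (isClosed_eq (continuous_apply 1) continuous_const).inter
      (isClosed_iInter fun x => isClosed_iInter fun y =>
        isClosed_eq (continuous_apply _) ((continuous_apply x).mul (continuous_apply y)))
  let Ψ : S → PontryaginDual I := fun f =>
    ⟨{ toFun := f.1, map_one' := f.2.1, map_mul' := f.2.2 }, continuous_of_discreteTopology⟩
  have hΨsurj : Function.Surjective Ψ := fun χ =>
    ⟨⟨⇑χ, map_one χ, map_mul χ⟩, rfl⟩
  have hΨcont : Continuous Ψ := by
    show @Continuous S (I →ₜ* Circle) _ _ Ψ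
    rw [(ContinuousMonoidHom.isInducing_toContinuousMap I Circle).continuous_iff]
    rw [ContinuousMap.continuous_compactOpen]
    intro K hK U hU
    have hKfin : K.Finite := hK.finite_of_discrete
    have : {f : S | Set.MapsTo ((ContinuousMonoidHom.toContinuousMap ∘ Ψ) f) K U} =
        ⋂ i ∈ K, {f : S | f.1 i ∈ U} := by
      ext f
      simp [Set.MapsTo]; exact Iff.rfl
    rw [this]
    exact hKfin.isOpen_biInter fun i _ =>
      hU.preimage ((continuous_apply i).comp continuous_subtype_val)
  have : CompactSpace S := isCompact_iff_compactSpace.mp hSclosed.isCompact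
  constructor
  rw [← hΨsurj.range_eq]
  exact isCompact_range hΨcont

theorem isOpenMap_of_compactSpace {G H : Type*} [Group G] [Group H] [TopologicalSpace G]
    [TopologicalSpace H] [IsTopologicalGroup G] [T2Space H] [CompactSpace G]
    (f : G →* H) (hf : Continuous f) (hsurj : Function.Surjective f) : IsOpenMap f := by
  intro U hU
  set S : Set G := ⋃ k : f.ker, (fun z => (k : G) * z) '' U with hS
  have hSopen : IsOpen S := isOpen_iUnion fun k => isOpenMap_mul_left _ U hU
  have hclosed : IsClosed (f '' Sᶜ) :=
    ((hSopen.isClosed_compl.isCompact).image hf).isClosed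
  have key : f '' U = (f '' Sᶜ)ᶜ := by
    ext y
    constructor
    · rintro ⟨u, hu, rfl⟩ ⟨z, hz, hzy⟩
      apply hz
      have hker : z * u⁻¹ ∈ f.ker := by
        rw [MonoidHom.mem_ker, map_mul, map_inv, hzy, mul_inv_cancel]
      exact Set.mem_iUnion.2 ⟨⟨z * u⁻¹, hker⟩, u, hu, by group⟩
    · intro hy
      obtain ⟨z, rfl⟩ := hsurj y
      rcases em (z ∈ S) with hz | hz
      · obtain ⟨k, w, hw, rfl⟩ := Set.mem_iUnion.1 hz
        refine ⟨w, hw, ?_⟩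
        rw [map_mul, k.2, one_mul]
      · exact absurd ⟨z, hz, rfl⟩ hy
  rw [key]
  exact hclosed.isOpen_compl

/-- Local sections of the restriction map `r : Î → Ĵ` of Pontryagin duals of a finite-index
inclusion `J ≤ I` of discrete abelian groups: each `γ ∈ Ĵ` has an open neighborhood `N`
admitting `n = [I : J]` continuous local inverses of `r` with mutually disjoint images that
exhaust `r⁻¹(E)` for every `E ⊆ N`, and the images of any `E ⊆ N` under any two of these
sections have the same Haar measure. -/
theorem stmt_15 {I : Type*} [CommGroup I] [TopologicalSpace I] [DiscreteTopology I]
    [IsTopologicalGroup I] (J : Subgroup I) [J.FiniteIndex]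
    [MeasurableSpace (PontryaginDual I)] [BorelSpace (PontryaginDual I)]
    (μ : Measure (PontryaginDual I)) [μ.IsHaarMeasure] (γ : PontryaginDual J) :
    ∃ N : Set (PontryaginDual J), IsOpen N ∧ γ ∈ N ∧
      ∃ h : Fin J.index → (N → PontryaginDual I),
        (∀ j, Continuous (h j)) ∧
        (∀ j k, j ≠ k → ∀ x y : N, h j x ≠ h k y) ∧
        (∀ (j) (x : N), PontryaginDual.map (subgroupInclusion J) (h j x) = (x : PontryaginDual J)) ∧
        (∀ E : Set N,
          (PontryaginDual.map (subgroupInclusion J)) ⁻¹' (Subtype.val '' E) = ⋃ j, h j '' E) ∧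
        (∀ E : Set N, ∀ j k, μ (h j '' E) = μ (h k '' E)) := by
  classical
  set r := PontryaginDual.map (subgroupInclusion J) with hrdef
  have rsurj : Function.Surjective r := by
    intro ξ
    obtain ⟨χ', hχ'⟩ := exists_monoidHom_extension J ξ.toMonoidHom
    exact ⟨⟨χ', continuous_of_discreteTopology⟩, ContinuousMonoidHom.ext fun j => hχ' j⟩
  haveI : CompactSpace (PontryaginDual I) := compactSpace_pontryaginDual I
  have ropen : IsOpenMap r :=
    isOpenMap_of_compactSpace r.toMonoidHom (map_continuous r) rsurj
  set K := r.toMonoidHom.ker with hKdef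
  have hKcard : Nat.card K = J.index := nat_card_ker_restriction J
  haveI : Finite K := Nat.finite_of_card_ne_zero
    (by rw [hKcard]; exact Subgroup.FiniteIndex.index_ne_zero)
  let e : Fin J.index ≃ K := (Finite.equivFinOfCardEq hKcard).symm
  -- the separating neighborhood
  set Vset : Set (PontryaginDual I) := ((K : Set (PontryaginDual I)) \ {1})ᶜ with hVdef
  have hVnhds : Vset ∈ nhds (1 : PontryaginDual I) := by
    refine IsOpen.mem_nhds ?_ ?_
    · exact ((Set.Finite.diff (Set.toFinite (K : Set (PontryaginDual I))) (t := {1})).isClosed).isOpen_compl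
    · simp [hVdef]
  obtain ⟨V0, hV0, hV0split⟩ := exists_nhds_split_inv hVnhds
  obtain ⟨W, hWsub, hWopen, hW1⟩ := mem_nhds_iff.mp hV0
  obtain ⟨α, hα⟩ := rsurj γ
  set U : Set (PontryaginDual I) := (fun z => α * z) '' W with hUdef
  have hUopen : IsOpen U := isOpenMap_mul_left α W hWopen
  have hmemK : ∀ z, r z = 1 → z ∈ K := fun z hz => MonoidHom.mem_ker.mpr hz
  have hKone : ∀ z : PontryaginDual I, z ∈ K → r z = 1 := fun z hz => hz
  have hUinj : ∀ z1 ∈ U, ∀ z2 ∈ U, r z1 = r z2 → z1 = z2 := by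
    rintro _ ⟨w1, hw1, rfl⟩ _ ⟨w2, hw2, rfl⟩ heq
    have h1 : (α * w1) / (α * w2) ∈ K := by
      refine hmemK _ ?_
      rw [map_div, heq, div_self']
    have h2 : (α * w1) / (α * w2) ∈ Vset := by
      have hquot : (α * w1) / (α * w2) = w1 / w2 := mul_div_mul_left_eq_div w1 w2 α
      rw [hquot]
      exact hV0split w1 (hWsub hw1) w2 (hWsub hw2)
    have : (α * w1) / (α * w2) = 1 := by
      by_contra hne
      exact h2 ⟨h1, hne⟩
    exact div_eq_one.mp this
  set N : Set (PontryaginDual J) := r '' U with hNdef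
  have hNopen : IsOpen N := ropen U hUopen
  have hγN : γ ∈ N := ⟨α, ⟨1, hW1, mul_one α⟩, hα⟩
  have hsec : ∀ x : N, ∃ z, z ∈ U ∧ r z = (x : PontryaginDual J) := by
    rintro ⟨x, z, hz, hzr⟩
    exact ⟨z, hz, hzr⟩
  choose s hsU hsr using hsec
  have huniq : ∀ (x : N) z, z ∈ U → r z = (x : PontryaginDual J) → z = s x :=
    fun x z hz hzr => hUinj z hz (s x) (hsU x) (by rw [hzr, hsr])
  have hscont : Continuous s := by
    rw [continuous_def]
    intro O hO
    have hpre : s ⁻¹' O = Subtype.val ⁻¹' (r '' (O ∩ U)) := by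
      ext x
      simp only [Set.mem_preimage]
      constructor
      · intro hx
        exact ⟨s x, ⟨hx, hsU x⟩, hsr x⟩
      · rintro ⟨z, ⟨hzO, hzU⟩, hzr⟩
        exact huniq x z hzU hzr ▸ hzO
    rw [hpre]
    exact (ropen _ (hO.inter hUopen)).preimage continuous_subtype_val
  have hrmul : ∀ (k : K) (z : PontryaginDual I), r ((k : PontryaginDual I) * z) = r z := by
    intro k z
    rw [map_mul, hKone _ k.2, one_mul]
  refine ⟨N, hNopen, hγN, fun j x => (e j : PontryaginDual I) * s x, ?_, ?_, ?_, ?_, ?_⟩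
  · exact fun j => continuous_const.mul hscont
  · intro j k hjk x y heq
    have heq' : (e j : PontryaginDual I) * s x = (e k : PontryaginDual I) * s y := heq
    have hxy : (x : PontryaginDual J) = y := by
      rw [← hsr x, ← hsr y, ← hrmul (e j) (s x), ← hrmul (e k) (s y)]
      exact congrArg r heq'
    have hxy' : x = y := Subtype.ext hxy
    subst hxy'
    exact hjk (e.injective (Subtype.ext (mul_right_cancel heq')))
  · intro j x
    rw [hrmul (e j) (s x), hsr]
  · intro E
    ext z
    simp only [Set.mem_preimage, Set.mem_iUnion, Set.mem_image]
    constructor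
    · rintro ⟨x, hxE, hxz⟩
      have hk : z / s x ∈ K := by
        refine hmemK _ ?_
        rw [map_div, hsr, ← hxz, div_self']
      refine ⟨e.symm ⟨z / s x, hk⟩, x, hxE, ?_⟩
      rw [e.apply_symm_apply]
      show z / s x * s x = z
      simp
    · rintro ⟨j, x, hxE, rfl⟩
      exact ⟨x, hxE, by rw [hrmul (e j) (s x), hsr x]⟩
  · intro E j k
    have him : ∀ m : Fin J.index,
        (fun x : N => (e m : PontryaginDual I) * s x) '' E
          = (fun z => (e m : PontryaginDual I) * z) '' (s '' E) := by
      intro m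
      rw [Set.image_image]
    have hmeas : ∀ m : Fin J.index,
        μ ((fun x : N => (e m : PontryaginDual I) * s x) '' E) = μ (s '' E) := by
      intro m
      rw [him m, Set.image_mul_left]
      exact measure_preimage_mul μ _ _
    rw [hmeas j, hmeas k]
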